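/- Let G be a connected finite simple graph with a split between A and B, let τ be a circle representation of G, and let γ_1, …, γ_{2k} be the maximal A- and B-subwords of the circular subsequence γ of τ induced by A ∪ B. Then for every index i there is a single index j such that for every vertex x occurring in γ_i, the second occurrence of x in γ lies in γ_j; that is, the second occurrences of all the symbols of γ_i are contained in one common subword. -/

import Mathlib

/-- The segment of the word `τ` strictly between the two occurrences of `u`. -/
def betweenOccs {V : Type*} [DecidableEq V] (τ : List V) (u : V) : List V :=
  ((τ.dropWhile (fun x => decide (x ≠ u))).drop 1).takeWhile (fun x => decide (x ≠ u))

/-- Two symbols `u` and `v` alternate in the circular word `τ` (i.e. their four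
occurrences appear in cyclic order `u, v, u, v`): exactly one of the two
occurrences of `v` lies strictly between the two occurrences of `u`. -/
def Alternates {V : Type*} [DecidableEq V] (τ : List V) (u v : V) : Prop :=
  (betweenOccs τ u).count v = 1

/-- `τ` is a circle representation of `G`: a circular word (modelled as a list read
cyclically) in which every vertex occurs exactly twice, and two distinct vertices are
adjacent iff their occurrences alternate. -/
def IsCircleRep {V : Type*} [DecidableEq V] (G : SimpleGraph V) (τ : List V) : Prop :=
  (∀ v : V, τ.count v = 2) ∧
  ∀ u v : V, u ≠ v → (G.Adj u v ↔ Alternates τ u v)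

/-- A split of `G` between `A` and `B`, with short sides `SA = 𝔰(A)` and `SB = 𝔰(B)`:
a partition of the vertices into four parts such that every vertex of `A` is adjacent
to every vertex of `B`, there are no edges between `SA` and `B ∪ SB` nor between
`SB` and `A ∪ SA`, and both sides have at least two vertices. -/
def IsSplit {V : Type*} [DecidableEq V] (G : SimpleGraph V) (A B SA SB : Finset V) : Prop :=
  (∀ v : V, v ∈ A ∪ B ∪ SA ∪ SB) ∧
  Disjoint A B ∧ Disjoint A SA ∧ Disjoint A SB ∧
  Disjoint B SA ∧ Disjoint B SB ∧ Disjoint SA SB ∧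
  (∀ a ∈ A, ∀ b ∈ B, G.Adj a b) ∧
  (∀ s ∈ SA, ∀ x ∈ B ∪ SB, ¬ G.Adj s x) ∧
  (∀ s ∈ SB, ∀ x ∈ A ∪ SA, ¬ G.Adj s x) ∧
  2 ≤ (A ∪ SA).card ∧ 2 ≤ (B ∪ SB).card

section CswAux
open List
variable {V : Type*} [DecidableEq V]

lemma csw_dropWhile_ne {u : V} : ∀ {P : List V}, u ∉ P → ∀ r : List V,
    (P ++ u :: r).dropWhile (fun x => decide (x ≠ u)) = u :: r := by
  intro P
  induction P with
  | nil => intro _ r; simp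
  | cons a t ih =>
    intro h r
    have ha : a ≠ u := by simp at h; tauto
    have ht : u ∉ t := by simp at h; tauto
    simpa [List.dropWhile_cons, ha] using ih ht r

lemma csw_takeWhile_ne {u : V} : ∀ {M : List V}, u ∉ M → ∀ r : List V,
    (M ++ u :: r).takeWhile (fun x => decide (x ≠ u)) = M := by
  intro M
  induction M with
  | nil => intro _ r; simp
  | cons a t ih =>
    intro h r
    have ha : a ≠ u := by simp at h; tauto
    have ht : u ∉ t := by simp at h; tauto
    simpa [List.takeWhile_cons, ha] using ih ht r

lemma csw_betweenOccs_eq {u : V} {P M S : List V} (hP : u ∉ P) (hM : u ∉ M) :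
    betweenOccs (P ++ u :: (M ++ u :: S)) u = M := by
  unfold betweenOccs
  rw [csw_dropWhile_ne hP]
  simpa using csw_takeWhile_ne hM S

lemma csw_alternates_iff {u v : V} {P M S : List V} (hP : u ∉ P) (hM : u ∉ M) :
    Alternates (P ++ u :: (M ++ u :: S)) u v ↔ M.count v = 1 := by
  unfold Alternates
  rw [csw_betweenOccs_eq hP hM]

lemma csw_split_first {u : V} {L : List V} (h : u ∈ L) :
    ∃ P S, L = P ++ u :: S ∧ u ∉ P := by
  induction L with
  | nil => cases h
  | cons a t ih =>
    by_cases ha : a = u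
    · exact ⟨[], t, by simp [ha], by simp⟩
    · have h' : u ∈ t := by
        rcases List.mem_cons.1 h with h | h
        · exact absurd h.symm ha
        · exact h
      obtain ⟨P, S, rfl, hP⟩ := ih h'
      refine ⟨a :: P, S, by simp, ?_⟩
      simp [hP]
      exact fun hh => ha hh.symm

lemma csw_split_two {u : V} {L : List V} (h : L.count u = 2) :
    ∃ P M S, L = P ++ u :: (M ++ u :: S) ∧ u ∉ P ∧ u ∉ M ∧ u ∉ S := by
  have hu : u ∈ L := count_pos_iff.1 (by omega)
  obtain ⟨P, S0, rfl, hP⟩ := csw_split_first hu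
  have hP0 : P.count u = 0 := count_eq_zero.2 hP
  have hc : S0.count u = 1 := by
    rw [count_append, count_cons_self, hP0] at h; omega
  have hu2 : u ∈ S0 := count_pos_iff.1 (by omega)
  obtain ⟨M, S, rfl, hM⟩ := csw_split_first hu2
  have hM0 : M.count u = 0 := count_eq_zero.2 hM
  have hS : u ∉ S := by
    rw [count_append, count_cons_self, hM0] at hc
    exact count_eq_zero.1 (by omega)
  exact ⟨P, M, S, rfl, hP, hM, hS⟩

lemma csw_alternates_rotate_one {u v a : V} {t : List V}
    (hu : (a :: t).count u = 2) (hv : (a :: t).count v = 2) (huv : u ≠ v) :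
    (Alternates (a :: t) u v ↔ Alternates (t ++ [a]) u v) := by
  by_cases hh : a = u
  · subst hh
    have hct : t.count a = 1 := by rw [count_cons_self] at hu; omega
    have hut : a ∈ t := count_pos_iff.1 (by omega)
    obtain ⟨P, S, rfl, hP⟩ := csw_split_first hut
    have hS : a ∉ S := by
      rw [count_append, count_cons_self, count_eq_zero.2 hP] at hct
      exact count_eq_zero.1 (by omega)
    have l1 : Alternates (a :: (P ++ a :: S)) a v ↔ P.count v = 1 := by
      have e : a :: (P ++ a :: S) = ([] : List V) ++ a :: (P ++ a :: S) := by simp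
      rw [e]; exact csw_alternates_iff (by simp) hP
    have l2 : Alternates ((P ++ a :: S) ++ [a]) a v ↔ S.count v = 1 := by
      have e : (P ++ a :: S) ++ [a] = P ++ a :: (S ++ a :: ([] : List V)) := by simp
      rw [e]; exact csw_alternates_iff hP hS
    have hvc : P.count v + S.count v = 2 := by
      simp only [count_cons, count_append, beq_iff_eq, if_neg huv] at hv
      omega
    rw [l1, l2]; omega
  · have hct : t.count u = 2 := by
      simp only [count_cons, beq_iff_eq, if_neg hh] at hu; omega
    obtain ⟨P, M, S, rfl, hP, hM, hS⟩ := csw_split_two hct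
    have l1 : Alternates (a :: (P ++ u :: (M ++ u :: S))) u v ↔ M.count v = 1 := by
      have e : a :: (P ++ u :: (M ++ u :: S)) = (a :: P) ++ u :: (M ++ u :: S) := by simp
      rw [e]
      refine csw_alternates_iff ?_ hM
      simp [hP]
      exact fun hh' => hh hh'.symm
    have l2 : Alternates ((P ++ u :: (M ++ u :: S)) ++ [a]) u v ↔ M.count v = 1 := by
      have e : (P ++ u :: (M ++ u :: S)) ++ [a] = P ++ u :: (M ++ u :: (S ++ [a])) := by simp
      rw [e]; exact csw_alternates_iff hP hM
    rw [l1, l2]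

lemma csw_alternates_rotate {u v : V} (huv : u ≠ v) :
    ∀ (n : ℕ) (L : List V), L.count u = 2 → L.count v = 2 →
    (Alternates L u v ↔ Alternates (L.rotate n) u v) := by
  intro n
  induction n with
  | zero => intro L _ _; rw [rotate_zero]
  | succ n ih =>
    intro L hu hv
    cases L with
    | nil => simp at hu
    | cons a t =>
      rw [rotate_cons_succ]
      have hperm : (a :: t).Perm (t ++ [a]) := by
        simpa using (List.perm_append_comm (l₁ := [a]) (l₂ := t))
      rw [csw_alternates_rotate_one hu hv huv]
      exact ih _ (by rw [← hperm.count_eq]; exact hu) (by rw [← hperm.count_eq]; exact hv)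

lemma csw_alternates_isRotated {u v : V} {L L' : List V} (hr : L ~r L')
    (hu : L.count u = 2) (hv : L.count v = 2) (huv : u ≠ v) :
    (Alternates L u v ↔ Alternates L' u v) := by
  obtain ⟨n, rfl⟩ := hr
  exact csw_alternates_rotate huv n L hu hv

lemma csw_alternates_filter {p : V → Bool} {u v : V} {L : List V}
    (hu : L.count u = 2) (hpu : p u = true) (hpv : p v = true)
    (h : Alternates L u v) : Alternates (L.filter p) u v := by
  obtain ⟨P, M, S, rfl, hP, hM, hS⟩ := csw_split_two hu
  rw [csw_alternates_iff hP hM] at h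
  have e : (P ++ u :: (M ++ u :: S)).filter p
      = P.filter p ++ u :: (M.filter p ++ u :: S.filter p) := by
    simp [List.filter_append, List.filter_cons, hpu]
  rw [e, csw_alternates_iff (fun hm => hP (mem_of_mem_filter hm))
    (fun hm => hM (mem_of_mem_filter hm))]
  rw [count_filter hpv]
  exact h

/-- The concatenation of the blocks `δ s, δ (s+1), …, δ (s+n-1)`. -/
def flatBlocks (δ : ℕ → List V) (s n : ℕ) : List V := ((List.range' s n).map δ).flatten

lemma flatBlocks_split (δ : ℕ → List V) (s m n : ℕ) :
    flatBlocks δ s (m + n) = flatBlocks δ s m ++ flatBlocks δ (s + m) n := by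
  unfold flatBlocks
  have h : List.range' s m ++ List.range' (s + m) n = List.range' s (m + n) := by
    simpa [Nat.add_comm] using List.range'_append s m n 1
  rw [← h, List.map_append, List.flatten_append]

lemma flatBlocks_one (δ : ℕ → List V) (s : ℕ) : flatBlocks δ s 1 = δ s := by
  simp [flatBlocks]

lemma mem_flatBlocks {δ : ℕ → List V} {s n : ℕ} {x : V} :
    x ∈ flatBlocks δ s n ↔ ∃ t, s ≤ t ∧ t < s + n ∧ x ∈ δ t := by
  simp only [flatBlocks, List.mem_flatten, List.mem_map]
  constructor
  · rintro ⟨l, ⟨t, htm, rfl⟩, hx⟩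
    rw [List.mem_range'_1] at htm
    exact ⟨t, htm.1, htm.2, hx⟩
  · rintro ⟨t, h1, h2, hx⟩
    exact ⟨δ t, ⟨t, List.mem_range'_1.2 ⟨h1, h2⟩, rfl⟩, hx⟩

lemma csw_core_occ (k : ℕ) (hk : 0 < k) (δ : ℕ → List V) (X Y : Finset V)
    (hdisj : Disjoint X Y)
    (hX : ∀ t < 2*k, t % 2 = 0 → ∀ z ∈ δ t, z ∈ X)
    (hY : ∀ t < 2*k, t % 2 = 1 → ∀ z ∈ δ t, z ∈ Y)
    (hne : ∀ t < 2*k, δ t ≠ [])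
    (x : V) (hx0 : x ∈ δ 0)
    (hcx : (flatBlocks δ 0 (2*k)).count x = 2)
    (halt : ∀ b ∈ Y, (betweenOccs (flatBlocks δ 0 (2*k)) x).count b = 1) :
    ∃ q, 0 < q ∧ q < 2*k ∧ q % 2 = 0 ∧ x ∈ δ q ∧
      (∀ t < 2*k, x ∈ δ t → t = 0 ∨ t = q) ∧
      ∀ b ∈ Y, (flatBlocks δ 1 (q-1)).count b = 1 := by
  have hxX : x ∈ X := hX 0 (by omega) (by omega) x hx0
  have hsplit0 : flatBlocks δ 0 (2*k) = δ 0 ++ flatBlocks δ 1 (2*k-1) := by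
    have h := flatBlocks_split δ 0 1 (2*k-1)
    rw [show (1 + (2*k-1)) = 2*k from by omega] at h
    simpa [flatBlocks_one] using h
  have h1lt : 1 < 2*k := by omega
  obtain ⟨b₀, hb₀⟩ := List.exists_mem_of_ne_nil (δ 1) (hne 1 h1lt)
  have hb₀Y : b₀ ∈ Y := hY 1 h1lt rfl b₀ hb₀
  have hx0c : 0 < (δ 0).count x := count_pos_iff.2 hx0
  by_cases h2 : 2 ≤ (δ 0).count x
  · exfalso
    have hc2 : (δ 0).count x = 2 := by
      rw [hsplit0, count_append] at hcx; omega
    obtain ⟨P, M, S, hδ0, hP, hM, hS⟩ := csw_split_two hc2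
    have hF : flatBlocks δ 0 (2*k) = P ++ x :: (M ++ x :: (S ++ flatBlocks δ 1 (2*k-1))) := by
      rw [hsplit0, hδ0]; simp
    have halt0 := halt b₀ hb₀Y
    rw [hF, csw_betweenOccs_eq hP hM] at halt0
    have hbM : b₀ ∈ M := count_pos_iff.1 (by omega)
    have hbδ0 : b₀ ∈ δ 0 := by rw [hδ0]; simp [hbM]
    have hbX : b₀ ∈ X := hX 0 (by omega) rfl b₀ hbδ0
    exact (Finset.disjoint_left.1 hdisj hbX) hb₀Y
  · have hc1 : (δ 0).count x = 1 := by omega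
    have hcR : (flatBlocks δ 1 (2*k-1)).count x = 1 := by
      rw [hsplit0, count_append] at hcx; omega
    have hxR : x ∈ flatBlocks δ 1 (2*k-1) := count_pos_iff.1 (by omega)
    obtain ⟨q, hq1, hq2, hxq⟩ := mem_flatBlocks.1 hxR
    have hq2' : q < 2*k := by omega
    have hqpar : q % 2 = 0 := by
      by_contra hodd
      have hxY : x ∈ Y := hY q hq2' (by omega) x hxq
      exact (Finset.disjoint_left.1 hdisj hxX) hxY
    obtain ⟨P₁, S₁, hδ0, hP₁⟩ := csw_split_first hx0
    obtain ⟨P₂, S₂, hδq, hP₂⟩ := csw_split_first hxq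
    have hFsplit : flatBlocks δ 0 (2*k)
        = δ 0 ++ (flatBlocks δ 1 (q-1) ++ (δ q ++ flatBlocks δ (q+1) (2*k - (q+1)))) := by
      rw [hsplit0]
      congr 1
      have h1 := flatBlocks_split δ 1 (q-1) (2*k - q)
      rw [show (q-1) + (2*k - q) = 2*k - 1 from by omega,
        show 1 + (q-1) = q from by omega] at h1
      rw [h1]
      congr 1
      have h2 := flatBlocks_split δ q 1 (2*k - (q+1))
      rw [show 1 + (2*k - (q+1)) = 2*k - q from by omega] at h2
      rw [h2, flatBlocks_one]
    have hF : flatBlocks δ 0 (2*k)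
        = P₁ ++ x :: ((S₁ ++ flatBlocks δ 1 (q-1) ++ P₂)
            ++ x :: (S₂ ++ flatBlocks δ (q+1) (2*k - (q+1)))) := by
      rw [hFsplit, hδ0, hδq]; simp
    have hcnt : (S₁ ++ flatBlocks δ 1 (q-1) ++ P₂).count x = 0
        ∧ (S₂ ++ flatBlocks δ (q+1) (2*k - (q+1))).count x = 0 := by
      have h := hcx
      rw [hF, count_append, count_cons_self, count_append, count_cons_self] at h
      constructor <;> omega
    have hxMid : x ∉ flatBlocks δ 1 (q-1) := by
      have := hcnt.1
      rw [count_append, count_append] at this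
      exact count_eq_zero.1 (by omega)
    have hxS₁ : x ∉ S₁ := by
      have := hcnt.1
      rw [count_append, count_append] at this
      exact count_eq_zero.1 (by omega)
    have hxP₂ : x ∉ P₂ := by
      have := hcnt.1
      rw [count_append, count_append] at this
      exact count_eq_zero.1 (by omega)
    have hxAft : x ∉ flatBlocks δ (q+1) (2*k - (q+1)) := by
      have := hcnt.2
      rw [count_append] at this
      exact count_eq_zero.1 (by omega)
    have hbet : betweenOccs (flatBlocks δ 0 (2*k)) x
        = S₁ ++ flatBlocks δ 1 (q-1) ++ P₂ := by
      rw [hF]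
      exact csw_betweenOccs_eq hP₁ (by
        intro hmem
        rcases List.mem_append.1 hmem with hmem | hmem
        · rcases List.mem_append.1 hmem with hmem | hmem
          · exact hxS₁ hmem
          · exact hxMid hmem
        · exact hxP₂ hmem)
    refine ⟨q, by omega, hq2', hqpar, hxq, ?_, ?_⟩
    · intro t ht hxt
      by_contra hcon
      push_neg at hcon
      obtain ⟨ht0, htq⟩ := hcon
      rcases lt_trichotomy t q with h | h | h
      · exact hxMid (mem_flatBlocks.2 ⟨t, by omega, by omega, hxt⟩)
      · exact htq h
      · exact hxAft (mem_flatBlocks.2 ⟨t, by omega, by omega, hxt⟩)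
    · intro b hb
      have h1 := halt b hb
      rw [hbet, count_append, count_append] at h1
      have hbS₁ : S₁.count b = 0 := by
        refine count_eq_zero.2 (fun hmem => ?_)
        have : b ∈ X := hX 0 (by omega) rfl b (by rw [hδ0]; simp [hmem])
        exact (Finset.disjoint_left.1 hdisj this) hb
      have hbP₂ : P₂.count b = 0 := by
        refine count_eq_zero.2 (fun hmem => ?_)
        have : b ∈ X := hX q hq2' hqpar b (by rw [hδq]; simp [hmem])
        exact (Finset.disjoint_left.1 hdisj this) hb
      omega

lemma csw_core_main (k : ℕ) (hk : 0 < k) (δ : ℕ → List V) (X Y : Finset V)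
    (hdisj : Disjoint X Y)
    (hX : ∀ t < 2*k, t % 2 = 0 → ∀ z ∈ δ t, z ∈ X)
    (hY : ∀ t < 2*k, t % 2 = 1 → ∀ z ∈ δ t, z ∈ Y)
    (hne : ∀ t < 2*k, δ t ≠ [])
    (hcx : ∀ x ∈ δ 0, (flatBlocks δ 0 (2*k)).count x = 2)
    (halt : ∀ x ∈ δ 0, ∀ b ∈ Y, (betweenOccs (flatBlocks δ 0 (2*k)) x).count b = 1) :
    ∃ j, 0 < j ∧ j < 2*k ∧ ∀ x ∈ δ 0, x ∈ δ j ∧ ∀ t < 2*k, x ∈ δ t → t = 0 ∨ t = j := by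
  have key : ∀ q₁ q₂ : ℕ, q₂ < 2*k → q₁ % 2 = 0 → q₂ % 2 = 0 → 0 < q₁ →
      (∀ b ∈ Y, (flatBlocks δ 1 (q₁-1)).count b = 1) →
      (∀ b ∈ Y, (flatBlocks δ 1 (q₂-1)).count b = 1) → ¬ q₁ < q₂ := by
    intro q₁ q₂ h2 hp1 hp2 hpos hc1 hc2 hlt
    obtain ⟨b, hbmem⟩ := List.exists_mem_of_ne_nil (δ (q₁+1)) (hne (q₁+1) (by omega))
    have hbY : b ∈ Y := hY (q₁+1) (by omega) (by omega) b hbmem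
    have e1 := hc1 b hbY
    have e2 := hc2 b hbY
    have hsplit : flatBlocks δ 1 (q₂-1)
        = flatBlocks δ 1 (q₁-1)
          ++ (δ q₁ ++ (δ (q₁+1) ++ flatBlocks δ (q₁+1+1) (q₂ - 1 - (q₁+1)))) := by
      have h1 := flatBlocks_split δ 1 (q₁-1) (q₂ - q₁)
      rw [show (q₁-1) + (q₂ - q₁) = q₂ - 1 from by omega,
        show 1 + (q₁-1) = q₁ from by omega] at h1
      rw [h1]
      congr 1
      have h2' := flatBlocks_split δ q₁ 1 (q₂ - q₁ - 1)
      rw [show 1 + (q₂ - q₁ - 1) = q₂ - q₁ from by omega] at h2'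
      rw [h2', flatBlocks_one]
      congr 1
      have h3 := flatBlocks_split δ (q₁+1) 1 (q₂ - 1 - (q₁+1))
      rw [show 1 + (q₂ - 1 - (q₁+1)) = q₂ - q₁ - 1 from by omega] at h3
      rw [h3, flatBlocks_one]
    rw [hsplit, count_append, count_append, count_append] at e2
    have hbpos : 0 < (δ (q₁+1)).count b := count_pos_iff.2 hbmem
    omega
  obtain ⟨x₀, hx₀⟩ := List.exists_mem_of_ne_nil (δ 0) (hne 0 (by omega))
  obtain ⟨j, hj0, hj2, hjpar, hxj, hjuniq, hjcnt⟩ :=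
    csw_core_occ k hk δ X Y hdisj hX hY hne x₀ hx₀ (hcx x₀ hx₀) (halt x₀ hx₀)
  refine ⟨j, hj0, hj2, fun x hx => ?_⟩
  obtain ⟨q, hq0, hq2, hqpar, hxq, huniq, hqcnt⟩ :=
    csw_core_occ k hk δ X Y hdisj hX hY hne x hx (hcx x hx) (halt x hx)
  have hqj : q = j := by
    rcases lt_trichotomy q j with h | h | h
    · exact absurd h (key q j hj2 hqpar hjpar hq0 hqcnt hjcnt)
    · exact h
    · exact absurd h (key j q hq2 hjpar hqpar hj0 hjcnt hqcnt)
  subst hqj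
  exact ⟨hxq, huniq⟩

end CswAux

open List in
/-- For every subword `γ i` there is a single index `j` such that the second
occurrences of all the symbols of `γ i` are contained in the one subword `γ j`:
every `x` occurring in `γ i` also occurs in `γ j`, and occurs in no subword
other than `γ i` and `γ j`. -/
theorem second_occurrences_in_common_subword
    {V : Type*} [DecidableEq V] [Fintype V]
    (G : SimpleGraph V) (hconn : G.Connected)
    (A B SA SB : Finset V) (hsplit : IsSplit G A B SA SB)
    (τ : List V) (hτ : IsCircleRep G τ)
    (k : ℕ) (γ : ℕ → List V)
    (hjoin : ((List.range (2 * k)).map γ).flatten ~r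
      τ.filter (fun x => decide (x ∈ A ∪ B)))
    (hne : ∀ i < 2 * k, γ i ≠ [])
    (hAword : ∀ i < 2 * k, i % 2 = 0 → ∀ x ∈ γ i, x ∈ A)
    (hBword : ∀ i < 2 * k, i % 2 = 1 → ∀ x ∈ γ i, x ∈ B) :
    ∀ i < 2 * k, ∃ j, j < 2 * k ∧
      ∀ x ∈ γ i, x ∈ γ j ∧ ∀ m < 2 * k, x ∈ γ m → m = i ∨ m = j := by
  obtain ⟨hcount, hadj⟩ := hτ
  obtain ⟨-, hAB, -, -, -, -, -, hADJ, -, -, -, -⟩ := hsplit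
  intro i hi
  have hk : 0 < k := by omega
  set p : V → Bool := fun x => decide (x ∈ A ∪ B) with hp
  set δ : ℕ → List V := fun t => γ ((i + t) % (2*k)) with hδ
  have hmodlt : ∀ t, (i + t) % (2*k) < 2*k := fun t => Nat.mod_lt _ (by omega)
  -- the rotated word equals a swap of the two pieces of the original flatten
  have e1 : flatBlocks δ 0 (2*k)
      = ((List.range' i (2*k - i)).map γ).flatten ++ ((List.range' 0 i).map γ).flatten := by
    have h := flatBlocks_split δ 0 (2*k - i) i
    rw [show (2*k - i) + i = 2*k from by omega] at h
    rw [h]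
    congr 1
    · show ((List.range' 0 (2*k-i)).map δ).flatten = _
      congr 1
      rw [List.range'_eq_map_range (s := 0) (n := 2*k-i), List.range'_eq_map_range (s := i) (n := 2*k-i),
        List.map_map, List.map_map]
      refine List.map_congr_left (fun t ht => ?_)
      have htlt : t < 2*k - i := List.mem_range.1 ht
      show γ ((i + (0 + t)) % (2*k)) = γ (i + t)
      rw [Nat.zero_add, Nat.mod_eq_of_lt (by omega)]
    · show ((List.range' (0 + (2*k - i)) i).map δ).flatten = _
      congr 1
      rw [List.range'_eq_map_range (s := 0 + (2*k - i)) (n := i), List.range'_eq_map_range (s := 0) (n := i),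
        List.map_map, List.map_map]
      refine List.map_congr_left (fun t ht => ?_)
      have htlt : t < i := List.mem_range.1 ht
      show γ ((i + (0 + (2*k - i) + t)) % (2*k)) = γ (0 + t)
      rw [show i + (0 + (2*k - i) + t) = t + 2*k from by omega, Nat.add_mod_right,
        Nat.mod_eq_of_lt (by omega), Nat.zero_add]
  have e2 : ((List.range (2*k)).map γ).flatten
      = ((List.range' 0 i).map γ).flatten ++ ((List.range' i (2*k - i)).map γ).flatten := by
    have h := flatBlocks_split γ 0 i (2*k - i)
    rw [show i + (2*k - i) = 2*k from by omega] at h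
    rw [List.range_eq_range']
    simpa [flatBlocks] using h
  have hFrot : flatBlocks δ 0 (2*k) ~r τ.filter p := by
    refine IsRotated.trans ?_ hjoin
    rw [e1, e2]
    exact List.isRotated_append
  have hcnt2 : ∀ z ∈ A ∪ B, (flatBlocks δ 0 (2*k)).count z = 2 := by
    intro z hz
    have h1 : (τ.filter p).count z = 2 := by
      rw [List.count_filter (by simp only [hp, decide_eq_true_eq]; exact hz)]
      exact hcount z
    exact (hFrot.perm.count_eq z).trans h1
  -- parity of blocks
  have hparity : ∀ t, ((i + t) % (2*k)) % 2 = (i + t) % 2 :=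
    fun t => Nat.mod_mod_of_dvd _ ⟨k, rfl⟩
  obtain ⟨X, Y, hdisj, hXmem, hYmem, hXsub, hYsub, hadjXY⟩ :
      ∃ X Y : Finset V, Disjoint X Y ∧
        (∀ t < 2*k, t % 2 = 0 → ∀ z ∈ δ t, z ∈ X) ∧
        (∀ t < 2*k, t % 2 = 1 → ∀ z ∈ δ t, z ∈ Y) ∧
        (∀ z ∈ X, z ∈ A ∪ B) ∧ (∀ z ∈ Y, z ∈ A ∪ B) ∧
        (∀ a ∈ X, ∀ b ∈ Y, G.Adj a b) := by
    rcases Nat.mod_two_eq_zero_or_one i with hpar | hpar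
    · refine ⟨A, B, hAB, ?_, ?_, fun z hz => Finset.mem_union_left _ hz,
        fun z hz => Finset.mem_union_right _ hz, hADJ⟩
      · intro t ht hte z hz
        exact hAword _ (hmodlt t) (by rw [hparity t]; omega) z hz
      · intro t ht hto z hz
        exact hBword _ (hmodlt t) (by rw [hparity t]; omega) z hz
    · refine ⟨B, A, hAB.symm, ?_, ?_, fun z hz => Finset.mem_union_right _ hz,
        fun z hz => Finset.mem_union_left _ hz, fun a ha b hb => (hADJ b hb a ha).symm⟩
      · intro t ht hte z hz
        exact hBword _ (hmodlt t) (by rw [hparity t]; omega) z hz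
      · intro t ht hto z hz
        exact hAword _ (hmodlt t) (by rw [hparity t]; omega) z hz
  have hδne : ∀ t < 2*k, δ t ≠ [] := fun t _ => hne _ (hmodlt t)
  have hcx : ∀ x ∈ δ 0, (flatBlocks δ 0 (2*k)).count x = 2 := by
    intro x hx
    exact hcnt2 x (hXsub x (hXmem 0 (by omega) rfl x hx))
  have halt : ∀ x ∈ δ 0, ∀ b ∈ Y, (betweenOccs (flatBlocks δ 0 (2*k)) x).count b = 1 := by
    intro x hx b hb
    have hxX : x ∈ X := hXmem 0 (by omega) rfl x hx
    have hxAB : x ∈ A ∪ B := hXsub x hxX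
    have hbAB : b ∈ A ∪ B := hYsub b hb
    have hneq : x ≠ b := by
      rintro rfl
      exact (Finset.disjoint_left.1 hdisj hxX) hb
    have h1 : Alternates τ x b := (hadj x b hneq).1 (hadjXY x hxX b hb)
    have h2 : Alternates (τ.filter p) x b :=
      csw_alternates_filter (hcount x) (by simp only [hp, decide_eq_true_eq]; exact hxAB) (by simp only [hp, decide_eq_true_eq]; exact hbAB) h1
    have h3 : Alternates (flatBlocks δ 0 (2*k)) x b :=
      (csw_alternates_isRotated hFrot (hcnt2 x hxAB) (hcnt2 b hbAB) hneq).2 h2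
    exact h3
  obtain ⟨j₀, hj₀pos, hj₀lt, hmain⟩ :=
    csw_core_main k hk δ X Y hdisj hXmem hYmem hδne hcx halt
  refine ⟨(i + j₀) % (2*k), hmodlt j₀, fun x hx => ?_⟩
  have hx0 : x ∈ δ 0 := by
    show x ∈ γ ((i + 0) % (2*k))
    rw [Nat.add_zero, Nat.mod_eq_of_lt hi]
    exact hx
  obtain ⟨hxj, huniq⟩ := hmain x hx0
  refine ⟨hxj, fun m hm hxm => ?_⟩
  have htlt : (m + (2*k - i)) % (2*k) < 2*k := Nat.mod_lt _ (by omega)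
  have hmod : (i + (m + (2*k - i)) % (2*k)) % (2*k) = m := by
    rw [Nat.add_mod_mod, show i + (m + (2*k - i)) = m + 2*k from by omega,
      Nat.add_mod_right, Nat.mod_eq_of_lt hm]
  have hxt : x ∈ δ ((m + (2*k - i)) % (2*k)) := by
    show x ∈ γ ((i + (m + (2*k - i)) % (2*k)) % (2*k))
    rw [hmod]
    exact hxm
  rcases huniq _ htlt hxt with h0 | hj
  · left
    rw [← hmod, h0, Nat.add_zero, Nat.mod_eq_of_lt hi]
  · right
    rw [← hmod, hj]
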